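/- Let μ₁, μ₂, ν₁, ν₂ be finite Borel measures on ℝ with compact support and let ε₁, ε₂ ≥ 0. Assume that for every function f : ℝ → ℝ with Lipschitz constant at most 1 one has ∫ f dμ₁ − ∫ f dμ₂ ≤ ε₁ and ∫ f dν₁ − ∫ f dν₂ ≤ ε₂. Then for every function f : ℝ → ℝ with Lipschitz constant at most 1 one has ∫ f d(μ₁ ∗ ν₁) − ∫ f d(μ₂ ∗ ν₂) ≤ ν₁(ℝ)·ε₁ + μ₂(ℝ)·ε₂. (This is the quantitative form of the continuity of the convolution with respect to the Hutchinson metric, Lemma 1.) -/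

import Mathlib

open MeasureTheory Topology Filter Pointwise

/-- Convolution of two Borel measures on ℝ: pushforward of the product measure
under the addition map. -/
noncomputable def mconv (μ ν : Measure ℝ) : Measure ℝ :=
  (μ.prod ν).map (fun p : ℝ × ℝ => p.1 + p.2)

/-- Topological support of a Borel measure on ℝ: the (closed) set of points all of
whose neighbourhoods have positive measure. -/
def msupp (μ : Measure ℝ) : Set ℝ := {x : ℝ | ∀ ε > 0, 0 < μ (Metric.ball x ε)}

lemma msupp_compl_null (μ : Measure ℝ) : μ (msupp μ)ᶜ = 0 := by
  apply measure_null_of_locally_null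
  intro x hx
  simp only [msupp, Set.mem_compl_iff, Set.mem_setOf_eq, not_forall] at hx
  obtain ⟨ε, hε, h0⟩ := hx
  refine ⟨Metric.ball x ε, mem_nhdsWithin_of_mem_nhds (Metric.ball_mem_nhds x hε), ?_⟩
  simpa using not_lt.1 h0

lemma ae_mem_msupp (μ : Measure ℝ) : ∀ᵐ x ∂μ, x ∈ msupp μ :=
  mem_ae_iff.2 (msupp_compl_null μ)

lemma lip_shift_right {f : ℝ → ℝ} (hf : LipschitzWith 1 f) (y : ℝ) :
    LipschitzWith 1 (fun x => f (x + y)) :=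
  LipschitzWith.of_dist_le_mul fun a b => by
    have := hf.dist_le_mul (a + y) (b + y)
    simpa [Real.dist_eq, add_sub_add_comm] using this

lemma lip_shift_left {f : ℝ → ℝ} (hf : LipschitzWith 1 f) (x : ℝ) :
    LipschitzWith 1 (fun y => f (x + y)) :=
  LipschitzWith.of_dist_le_mul fun a b => by
    have := hf.dist_le_mul (x + a) (x + b)
    simpa [Real.dist_eq, add_sub_add_comm] using this

lemma conv_integrable (μ ν : Measure ℝ) [IsFiniteMeasure μ] [IsFiniteMeasure ν]
    (hμc : IsCompact (msupp μ)) (hνc : IsCompact (msupp ν))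
    {f : ℝ → ℝ} (hf : LipschitzWith 1 f) :
    Integrable (fun p : ℝ × ℝ => f (p.1 + p.2)) (μ.prod ν) := by
  have hK : IsCompact (msupp μ + msupp ν) := hμc.add hνc
  obtain ⟨C, hC⟩ : ∃ C, ∀ z ∈ msupp μ + msupp ν, ‖f z‖ ≤ C := by
    rcases (hK.image_of_continuousOn (hf.continuous.norm.continuousOn)).bddAbove
      with ⟨C, hC⟩
    exact ⟨C, fun z hz => hC ⟨z, hz, rfl⟩⟩
  have haem : ∀ᵐ p ∂(μ.prod ν), p ∈ (msupp μ) ×ˢ (msupp ν) :=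
    mem_ae_iff.2 (Measure.measure_prod_compl_eq_zero (msupp_compl_null μ) (msupp_compl_null ν))
  refine ⟨(hf.continuous.comp (continuous_fst.add continuous_snd)).aestronglyMeasurable, ?_⟩
  apply HasFiniteIntegral.of_bounded (C := C)
  filter_upwards [haem] with p hp
  exact hC _ (Set.add_mem_add hp.1 hp.2)

lemma mconv_integral (μ ν : Measure ℝ) [IsFiniteMeasure μ] [IsFiniteMeasure ν]
    {f : ℝ → ℝ} (hf : LipschitzWith 1 f)
    (hint : Integrable (fun p : ℝ × ℝ => f (p.1 + p.2)) (μ.prod ν)) :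
    ∫ z, f z ∂(mconv μ ν) = ∫ x, ∫ y, f (x + y) ∂ν ∂μ := by
  rw [mconv, integral_map (φ := fun p : ℝ × ℝ => p.1 + p.2) (measurable_fst.add measurable_snd).aemeasurable
    hf.continuous.aestronglyMeasurable]
  exact integral_prod _ hint

lemma mconv_integral_symm (μ ν : Measure ℝ) [IsFiniteMeasure μ] [IsFiniteMeasure ν]
    {f : ℝ → ℝ} (hf : LipschitzWith 1 f)
    (hint : Integrable (fun p : ℝ × ℝ => f (p.1 + p.2)) (μ.prod ν)) :
    ∫ z, f z ∂(mconv μ ν) = ∫ y, ∫ x, f (x + y) ∂μ ∂ν := by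
  rw [mconv, integral_map (φ := fun p : ℝ × ℝ => p.1 + p.2) (measurable_fst.add measurable_snd).aemeasurable
    hf.continuous.aestronglyMeasurable]
  exact integral_prod_symm _ hint

/-- Quantitative continuity of the convolution w.r.t. the Hutchinson metric (Lemma 1). -/
theorem convolution_hutchinson_estimate
    (μ₁ μ₂ ν₁ ν₂ : Measure ℝ)
    [IsFiniteMeasure μ₁] [IsFiniteMeasure μ₂] [IsFiniteMeasure ν₁] [IsFiniteMeasure ν₂]
    (hμ₁c : IsCompact (msupp μ₁)) (hμ₂c : IsCompact (msupp μ₂))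
    (hν₁c : IsCompact (msupp ν₁)) (hν₂c : IsCompact (msupp ν₂))
    (ε₁ ε₂ : ℝ) (hε₁ : 0 ≤ ε₁) (hε₂ : 0 ≤ ε₂)
    (hμ : ∀ f : ℝ → ℝ, LipschitzWith 1 f → ∫ x, f x ∂μ₁ - ∫ x, f x ∂μ₂ ≤ ε₁)
    (hν : ∀ f : ℝ → ℝ, LipschitzWith 1 f → ∫ x, f x ∂ν₁ - ∫ x, f x ∂ν₂ ≤ ε₂) :
    ∀ f : ℝ → ℝ, LipschitzWith 1 f →
      ∫ z, f z ∂(mconv μ₁ ν₁) - ∫ z, f z ∂(mconv μ₂ ν₂) ≤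
        (ν₁ Set.univ).toReal * ε₁ + (μ₂ Set.univ).toReal * ε₂ := by
  intro f hf
  have h11 := conv_integrable μ₁ ν₁ hμ₁c hν₁c hf
  have h21 := conv_integrable μ₂ ν₁ hμ₂c hν₁c hf
  have h22 := conv_integrable μ₂ ν₂ hμ₂c hν₂c hf
  -- first comparison: μ₁ vs μ₂, ν₁ fixed
  have step1 : ∫ z, f z ∂(mconv μ₁ ν₁) - ∫ z, f z ∂(mconv μ₂ ν₁) ≤
      (ν₁ Set.univ).toReal * ε₁ := by
    rw [mconv_integral_symm μ₁ ν₁ hf h11, mconv_integral_symm μ₂ ν₁ hf h21,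
      ← integral_sub h11.integral_prod_right h21.integral_prod_right]
    calc ∫ y, (∫ x, f (x + y) ∂μ₁ - ∫ x, f (x + y) ∂μ₂) ∂ν₁
        ≤ ∫ _, ε₁ ∂ν₁ := by
          apply integral_mono (h11.integral_prod_right.sub h21.integral_prod_right)
            (integrable_const _)
          intro y
          exact hμ _ (lip_shift_right hf y)
      _ = (ν₁ Set.univ).toReal * ε₁ := by rw [integral_const, smul_eq_mul, measureReal_def]
  -- second comparison: ν₁ vs ν₂, μ₂ fixed
  have step2 : ∫ z, f z ∂(mconv μ₂ ν₁) - ∫ z, f z ∂(mconv μ₂ ν₂) ≤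
      (μ₂ Set.univ).toReal * ε₂ := by
    rw [mconv_integral μ₂ ν₁ hf h21, mconv_integral μ₂ ν₂ hf h22,
      ← integral_sub h21.integral_prod_left h22.integral_prod_left]
    calc ∫ x, (∫ y, f (x + y) ∂ν₁ - ∫ y, f (x + y) ∂ν₂) ∂μ₂
        ≤ ∫ _, ε₂ ∂μ₂ := by
          apply integral_mono (h21.integral_prod_left.sub h22.integral_prod_left)
            (integrable_const _)
          intro x
          exact hν _ (lip_shift_left hf x)
      _ = (μ₂ Set.univ).toReal * ε₂ := by rw [integral_const, smul_eq_mul, measureReal_def]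
  linarith
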